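/- Let f: [a,b] → ℂ be bounded by M and Hölder continuous of order γ ∈ (0,1] with constant L, i.e. |f(x) − f(y)| ≤ L|x − y|^γ for all x, y ∈ [a,b]. Then for every real λ with |λ| ≥ (b − a)^{−1}, |∫_a^b f(x) e^{iλx} dx| ≤ (3(b − a)L + 2M(b − a)^{1−γ}) |λ|^{−γ}. -/

import Mathlib

open MeasureTheory Set Filter

/-- Abel summation for telescoping differences. -/
lemma abel_aux (g h : ℕ → ℂ) (n : ℕ) :
    ∑ j ∈ Finset.range (n + 1), g j * (h (j + 1) - h j)
      = ∑ j ∈ Finset.range n, (g j - g (j + 1)) * h (j + 1)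
        + g n * h (n + 1) - g 0 * h 0 := by
  induction n with
  | zero => simp [mul_sub]
  | succ n ih =>
    rw [Finset.sum_range_succ, ih, Finset.sum_range_succ]
    ring

lemma norm_exp_I_mul (l t : ℝ) : ‖Complex.exp (Complex.I * l * t)‖ = 1 := by
  rw [Complex.norm_exp]
  simp [Complex.mul_re]

/-- Rate of convergence in the Riemann–Lebesgue lemma for a bounded
`γ`-Hölder continuous function. -/
theorem fourier_decay_of_holder
    (a b : ℝ) (hab : a < b) (f : ℝ → ℂ) (γ L M : ℝ)
    (hγ : γ ∈ Ioc (0:ℝ) 1) (hL : 0 < L) (hM : 0 < M)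
    (hbound : ∀ x ∈ Icc a b, ‖f x‖ ≤ M)
    (hHolder : ∀ x ∈ Icc a b, ∀ y ∈ Icc a b, ‖f x - f y‖ ≤ L * |x - y| ^ γ)
    (l : ℝ) (hl : (b - a)⁻¹ ≤ |l|) :
    ‖∫ x in a..b, f x * Complex.exp (Complex.I * l * x)‖ ≤
      (3 * (b - a) * L + 2 * M * (b - a) ^ (1 - γ)) * |l| ^ (-γ) := by
  obtain ⟨hγ0, hγ1⟩ := hγ
  have hba : 0 < b - a := sub_pos.2 hab
  have hl0 : 0 < |l| := lt_of_lt_of_le (inv_pos.2 hba) hl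
  have hlne : l ≠ 0 := fun h => by simp [h] at hl0
  have hcne : (Complex.I * l : ℂ) ≠ 0 :=
    mul_ne_zero Complex.I_ne_zero (by exact_mod_cast hlne)
  -- continuity of f on [a, b]
  have hcont : ContinuousOn f (Icc a b) := by
    intro x hx
    have hk : Continuous fun y : ℝ => L * |y - x| ^ γ :=
      continuous_const.mul ((Real.continuous_rpow_const hγ0.le).comp
        (continuous_abs.comp (continuous_id.sub continuous_const)))
    have hk0 : Tendsto (fun y : ℝ => L * |y - x| ^ γ) (nhdsWithin x (Icc a b)) (nhds 0) := by
      have := (hk.tendsto x).mono_left (nhdsWithin_le_nhds (s := Icc a b))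
      simpa [Real.zero_rpow hγ0.ne'] using this
    rw [ContinuousWithinAt, tendsto_iff_dist_tendsto_zero]
    apply squeeze_zero' (Filter.Eventually.of_forall fun _ => dist_nonneg) _ hk0
    filter_upwards [self_mem_nhdsWithin] with y hy
    simpa [dist_eq_norm] using hHolder y hy x hx
  set E : ℝ → ℂ := fun t => Complex.exp (Complex.I * l * t) with hE
  have hEcont : Continuous E := by
    apply Complex.continuous_exp.comp
    exact (continuous_const.mul Complex.continuous_ofReal)
  -- the partition
  have ht1 : 1 ≤ (b - a) * |l| := by
    have h := mul_le_mul_of_nonneg_left hl hba.le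
    rwa [mul_inv_cancel₀ hba.ne'] at h
  set N : ℕ := ⌈(b - a) * |l|⌉₊ with hNdef
  have hN1 : 1 ≤ N := Nat.one_le_ceil_iff.2 (lt_of_lt_of_le zero_lt_one ht1)
  have hNpos : (0 : ℝ) < N := by exact_mod_cast hN1
  have hNgeR : (b - a) * |l| ≤ (N : ℝ) := Nat.le_ceil _
  have hNle : (N : ℝ) ≤ 2 * ((b - a) * |l|) := by
    have h := (Nat.ceil_lt_add_one (by positivity : (0:ℝ) ≤ (b - a) * |l|)).le
    calc (N : ℝ) ≤ (b - a) * |l| + 1 := h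
      _ ≤ 2 * ((b - a) * |l|) := by linarith
  clear_value N
  set δ : ℝ := (b - a) / N with hδdef
  have hδ0 : 0 < δ := div_pos hba hNpos
  have hNδ : (N : ℝ) * δ = b - a := by
    rw [hδdef]; field_simp [hNpos.ne']
  set p : ℕ → ℝ := fun j => a + j * δ with hp
  have hstep : ∀ j : ℕ, p (j + 1) - p j = δ := by
    intro j; simp only [hp]; push_cast; ring
  have hmem : ∀ j ≤ N, p j ∈ Icc a b := by
    intro j hj
    constructor
    · simp only [hp]
      nlinarith [hδ0.le, Nat.cast_nonneg (α := ℝ) j]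
    · have : (j : ℝ) * δ ≤ (N : ℝ) * δ := by
        apply mul_le_mul_of_nonneg_right _ hδ0.le
        exact_mod_cast hj
      simp only [hp]
      linarith [hNδ]
  have hple : ∀ j : ℕ, p j ≤ p (j + 1) := fun j => by linarith [hstep j, hδ0.le]
  -- integrability on subintervals
  have hFint : ∀ j < N, IntervalIntegrable (fun t => f t * E t) volume (p j) (p (j + 1)) := by
    intro j hj
    apply ContinuousOn.intervalIntegrable
    have hsub : uIcc (p j) (p (j + 1)) ⊆ Icc a b :=
      uIcc_subset_Icc (hmem j hj.le) (hmem (j + 1) hj)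
    exact (hcont.mono hsub).mul (hEcont.continuousOn)
  -- split the integral
  have hp0 : p 0 = a := by simp [hp]
  have hpN : p N = b := by simp only [hp]; linarith [hNδ]
  have hsplit : (∫ x in a..b, f x * E x)
      = ∑ j ∈ Finset.range N, ∫ t in p j..p (j + 1), f t * E t := by
    rw [intervalIntegral.sum_integral_adjacent_intervals hFint, hp0, hpN]
  -- each piece
  have hpiece : ∀ j < N, (∫ t in p j..p (j + 1), f t * E t)
      = (∫ t in p j..p (j + 1), (f t - f (p j)) * E t)
        + f (p j) * (E (p (j + 1)) - E (p j)) / (Complex.I * l) := by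
    intro j hj
    have hsub : uIcc (p j) (p (j + 1)) ⊆ Icc a b :=
      uIcc_subset_Icc (hmem j hj.le) (hmem (j + 1) hj)
    have h1 : IntervalIntegrable (fun t => (f t - f (p j)) * E t) volume (p j) (p (j + 1)) := by
      apply ContinuousOn.intervalIntegrable
      exact ((hcont.mono hsub).sub continuousOn_const).mul hEcont.continuousOn
    have h2 : IntervalIntegrable (fun t => f (p j) * E t) volume (p j) (p (j + 1)) :=
      (continuous_const.mul hEcont).intervalIntegrable _ _
    have hfe : ∀ t : ℝ, f t * E t = (f t - f (p j)) * E t + f (p j) * E t := fun t => by ring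
    rw [intervalIntegral.integral_congr (g := fun t => (f t - f (p j)) * E t + f (p j) * E t)
      (fun t _ => hfe t), intervalIntegral.integral_add h1 h2,
      intervalIntegral.integral_const_mul]
    have : (∫ t in p j..p (j + 1), E t)
        = (E (p (j + 1)) - E (p j)) / (Complex.I * l) := by
      simp only [hE]
      exact integral_exp_mul_complex hcne
    rw [this, mul_div_assoc]
  -- oscillation bound on each piece
  have hosc : ∀ j < N, ‖∫ t in p j..p (j + 1), (f t - f (p j)) * E t‖ ≤ L * δ ^ γ * δ := by
    intro j hj
    have h := intervalIntegral.norm_integral_le_of_norm_le_const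
      (C := L * δ ^ γ) (a := p j) (b := p (j + 1)) (f := fun t => (f t - f (p j)) * E t) ?_
    · rw [hstep j, abs_of_pos hδ0] at h
      exact h
    · intro t ht
      rw [Set.uIoc_of_le (hple j)] at ht
      have htm : t ∈ Icc a b := by
        have h1 := (hmem j hj.le).1
        have h2 := (hmem (j + 1) hj).2
        exact ⟨le_trans h1 ht.1.le, le_trans ht.2 h2⟩
      have habs : |t - p j| ≤ δ := by
        rw [abs_of_nonneg (by linarith [ht.1.le])]
        have := ht.2
        have := hstep j
        linarith
      calc ‖(f t - f (p j)) * E t‖ = ‖f t - f (p j)‖ := by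
            rw [norm_mul, hE, norm_exp_I_mul, mul_one]
        _ ≤ L * |t - p j| ^ γ := hHolder t htm (p j) (hmem j hj.le)
        _ ≤ L * δ ^ γ := by
            apply mul_le_mul_of_nonneg_left _ hL.le
            exact Real.rpow_le_rpow (abs_nonneg _) habs hγ0.le
  -- Abel sum bound
  have hS : ‖∑ j ∈ Finset.range N, f (p j) * (E (p (j + 1)) - E (p j))‖
      ≤ (N : ℝ) * (L * δ ^ γ) + 2 * M := by
    obtain ⟨n, rfl⟩ : ∃ n, N = n + 1 := ⟨N - 1, (Nat.succ_pred_eq_of_pos hN1).symm⟩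
    rw [abel_aux (fun j => f (p j)) (fun j => E (p j)) n]
    have hterm : ∀ j ∈ Finset.range n, ‖(f (p j) - f (p (j + 1))) * E (p (j + 1))‖
        ≤ L * δ ^ γ := by
      intro j hj
      rw [Finset.mem_range] at hj
      have hj1 : j + 1 ≤ n + 1 := by omega
      have habs : |p j - p (j + 1)| = δ := by
        rw [abs_sub_comm, hstep j, abs_of_pos hδ0]
      calc ‖(f (p j) - f (p (j + 1))) * E (p (j + 1))‖
          = ‖f (p j) - f (p (j + 1))‖ := by rw [norm_mul, hE, norm_exp_I_mul, mul_one]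
        _ ≤ L * |p j - p (j + 1)| ^ γ :=
            hHolder (p j) (hmem j (by omega)) (p (j + 1)) (hmem (j + 1) hj1)
        _ = L * δ ^ γ := by rw [habs]
    have h1 : ‖∑ j ∈ Finset.range n, (f (p j) - f (p (j + 1))) * E (p (j + 1))‖
        ≤ (n : ℝ) * (L * δ ^ γ) := by
      calc ‖∑ j ∈ Finset.range n, (f (p j) - f (p (j + 1))) * E (p (j + 1))‖
          ≤ ∑ j ∈ Finset.range n, ‖(f (p j) - f (p (j + 1))) * E (p (j + 1))‖ :=
            norm_sum_le _ _
        _ ≤ ∑ _j ∈ Finset.range n, (L * δ ^ γ) := Finset.sum_le_sum hterm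
        _ = (n : ℝ) * (L * δ ^ γ) := by
            rw [Finset.sum_const, Finset.card_range, nsmul_eq_mul]
    have h2 : ‖f (p n) * E (p (n + 1))‖ ≤ M := by
      rw [norm_mul, hE, norm_exp_I_mul, mul_one]
      exact hbound _ (hmem n (by omega))
    have h3 : ‖f (p 0) * E (p 0)‖ ≤ M := by
      rw [norm_mul, hE, norm_exp_I_mul, mul_one]
      exact hbound _ (hmem 0 (by omega))
    have hNn : (n : ℝ) * (L * δ ^ γ) ≤ ((n : ℝ) + 1) * (L * δ ^ γ) := by
      apply mul_le_mul_of_nonneg_right (by linarith) (by positivity)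
    calc ‖∑ j ∈ Finset.range n, (f (p j) - f (p (j + 1))) * E (p (j + 1))
          + f (p n) * E (p (n + 1)) - f (p 0) * E (p 0)‖
        ≤ ‖∑ j ∈ Finset.range n, (f (p j) - f (p (j + 1))) * E (p (j + 1))
          + f (p n) * E (p (n + 1))‖ + ‖f (p 0) * E (p 0)‖ := norm_sub_le _ _
      _ ≤ ‖∑ j ∈ Finset.range n, (f (p j) - f (p (j + 1))) * E (p (j + 1))‖
          + ‖f (p n) * E (p (n + 1))‖ + ‖f (p 0) * E (p 0)‖ := by
            linarith [norm_add_le (∑ j ∈ Finset.range n,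
              (f (p j) - f (p (j + 1))) * E (p (j + 1))) (f (p n) * E (p (n + 1)))]
      _ ≤ (n : ℝ) * (L * δ ^ γ) + M + M := by linarith
      _ ≤ ((n : ℕ) + 1 : ℕ) * (L * δ ^ γ) + 2 * M := by push_cast; linarith
  -- main estimate
  have hnormc : ‖(Complex.I * l : ℂ)‖ = |l| := by
    rw [norm_mul, Complex.norm_I, one_mul, Complex.norm_real, Real.norm_eq_abs]
  have key : ‖∫ x in a..b, f x * E x‖
      ≤ (b - a) * (L * δ ^ γ) + ((N : ℝ) * (L * δ ^ γ) + 2 * M) / |l| := by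
    rw [hsplit, Finset.sum_congr rfl (fun j hj => hpiece j (Finset.mem_range.1 hj)),
      Finset.sum_add_distrib]
    have hsum2 : ∑ j ∈ Finset.range N, f (p j) * (E (p (j + 1)) - E (p j)) / (Complex.I * l)
        = (∑ j ∈ Finset.range N, f (p j) * (E (p (j + 1)) - E (p j))) / (Complex.I * l) := by
      rw [Finset.sum_div]
    rw [hsum2]
    have hb1 : ‖∑ j ∈ Finset.range N, ∫ t in p j..p (j + 1), (f t - f (p j)) * E t‖
        ≤ (b - a) * (L * δ ^ γ) := by
      calc ‖∑ j ∈ Finset.range N, ∫ t in p j..p (j + 1), (f t - f (p j)) * E t‖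
          ≤ ∑ j ∈ Finset.range N, ‖∫ t in p j..p (j + 1), (f t - f (p j)) * E t‖ :=
            norm_sum_le _ _
        _ ≤ ∑ j ∈ Finset.range N, (L * δ ^ γ * δ) :=
            Finset.sum_le_sum fun j hj => hosc j (Finset.mem_range.1 hj)
        _ = (N : ℝ) * (L * δ ^ γ * δ) := by
            rw [Finset.sum_const, Finset.card_range, nsmul_eq_mul]
        _ = (b - a) * (L * δ ^ γ) := by rw [← hNδ]; ring
    have hb2 : ‖(∑ j ∈ Finset.range N, f (p j) * (E (p (j + 1)) - E (p j))) / (Complex.I * l)‖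
        ≤ ((N : ℝ) * (L * δ ^ γ) + 2 * M) / |l| := by
      rw [norm_div, hnormc]
      gcongr
    calc ‖(∑ j ∈ Finset.range N, ∫ t in p j..p (j + 1), (f t - f (p j)) * E t)
          + (∑ j ∈ Finset.range N, f (p j) * (E (p (j + 1)) - E (p j))) / (Complex.I * l)‖
        ≤ ‖∑ j ∈ Finset.range N, ∫ t in p j..p (j + 1), (f t - f (p j)) * E t‖
          + ‖(∑ j ∈ Finset.range N, f (p j) * (E (p (j + 1)) - E (p j))) / (Complex.I * l)‖ :=
          norm_add_le _ _
      _ ≤ (b - a) * (L * δ ^ γ) + ((N : ℝ) * (L * δ ^ γ) + 2 * M) / |l| := by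
          linarith
  -- numeric estimates
  have hδle : δ ≤ |l|⁻¹ := by
    rw [hδdef, div_le_iff₀ hNpos]
    calc b - a = |l|⁻¹ * ((b - a) * |l|) := by field_simp
      _ ≤ |l|⁻¹ * N := by
          apply mul_le_mul_of_nonneg_left hNgeR (by positivity)
  have hrγ : δ ^ γ ≤ |l| ^ (-γ) := by
    have h1 : δ ^ γ ≤ (|l|⁻¹) ^ γ := Real.rpow_le_rpow hδ0.le hδle hγ0.le
    rwa [Real.inv_rpow hl0.le, ← Real.rpow_neg hl0.le] at h1
  have hinv : |l|⁻¹ ≤ (b - a) ^ (1 - γ) * |l| ^ (-γ) := by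
    have h1 : |l| ^ (γ - 1) ≤ ((b - a)⁻¹) ^ (γ - 1) :=
      Real.rpow_le_rpow_of_nonpos (inv_pos.2 hba) hl (by linarith)
    have h2 : ((b - a)⁻¹) ^ (γ - 1) = (b - a) ^ (1 - γ) := by
      rw [Real.inv_rpow hba.le, ← Real.rpow_neg hba.le, neg_sub]
    have h3 : |l|⁻¹ = |l| ^ (γ - 1) * |l| ^ (-γ) := by
      rw [← Real.rpow_add hl0, show γ - 1 + -γ = -1 by ring, Real.rpow_neg_one]
    calc |l|⁻¹ = |l| ^ (γ - 1) * |l| ^ (-γ) := h3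
      _ ≤ (b - a) ^ (1 - γ) * |l| ^ (-γ) :=
        mul_le_mul_of_nonneg_right (h1.trans_eq h2) (Real.rpow_nonneg (abs_nonneg l) _)
  -- put everything together
  have e1 : (b - a) * (L * δ ^ γ) ≤ (b - a) * (L * |l| ^ (-γ)) :=
    mul_le_mul_of_nonneg_left (mul_le_mul_of_nonneg_left hrγ hL.le) hba.le
  have e2a : (N : ℝ) * (L * δ ^ γ) / |l| ≤ 2 * (b - a) * L * |l| ^ (-γ) := by
    rw [div_le_iff₀ hl0]
    calc (N : ℝ) * (L * δ ^ γ) ≤ (2 * ((b - a) * |l|)) * (L * |l| ^ (-γ)) :=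
          mul_le_mul hNle (mul_le_mul_of_nonneg_left hrγ hL.le) (by positivity) (by positivity)
      _ = 2 * (b - a) * L * |l| ^ (-γ) * |l| := by ring
  have e2b : 2 * M / |l| ≤ 2 * M * ((b - a) ^ (1 - γ) * |l| ^ (-γ)) := by
    rw [div_eq_mul_inv]
    exact mul_le_mul_of_nonneg_left hinv (by positivity)
  have hsplitdiv : ((N : ℝ) * (L * δ ^ γ) + 2 * M) / |l|
      = (N : ℝ) * (L * δ ^ γ) / |l| + 2 * M / |l| := by rw [add_div]
  calc ‖∫ x in a..b, f x * E x‖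
      ≤ (b - a) * (L * δ ^ γ) + ((N : ℝ) * (L * δ ^ γ) + 2 * M) / |l| := key
    _ = (b - a) * (L * δ ^ γ) + ((N : ℝ) * (L * δ ^ γ) / |l| + 2 * M / |l|) := by
        rw [hsplitdiv]
    _ ≤ (b - a) * (L * |l| ^ (-γ)) + (2 * (b - a) * L * |l| ^ (-γ)
        + 2 * M * ((b - a) ^ (1 - γ) * |l| ^ (-γ))) := by linarith
    _ = (3 * (b - a) * L + 2 * M * (b - a) ^ (1 - γ)) * |l| ^ (-γ) := by ring
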